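/- For every nonnegative integer n and complex numbers a, x (with a not a nonpositive half-integer), the quadratic transformation ₃F₂(-n, a+ix, a-ix; a, a+1/2; 1) = ₂F₁(-2n, a+ix; 2a; 2) holds, where both sides are terminating sums. -/

import Mathlib

open Finset Complex

/-- Pochhammer symbol `(a)_k = a(a+1)⋯(a+k-1)`. -/
noncomputable def poch (a : ℂ) (k : ℕ) : ℂ := ∏ j ∈ Finset.range k, (a + j)

lemma poch_zero (a : ℂ) : poch a 0 = 1 := by simp [poch]

lemma poch_succ (a : ℂ) (k : ℕ) : poch a (k + 1) = poch a k * (a + k) :=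
  Finset.prod_range_succ _ _

lemma poch_add (a : ℂ) (m k : ℕ) : poch a (m + k) = poch a m * poch (a + m) k := by
  simp only [poch, Finset.prod_range_add]
  congr 1
  apply Finset.prod_congr rfl
  intro j _
  push_cast
  ring

lemma poch_ne_zero {a : ℂ} (h : ∀ j : ℕ, a + j ≠ 0) (k : ℕ) : poch a k ≠ 0 :=
  Finset.prod_ne_zero_iff.2 fun j _ => h j

lemma vander (M : ℕ) (x y : ℂ) :
    poch (x + y) M = ∑ i ∈ range (M + 1), (M.choose i : ℂ) * (poch x i * poch y (M - i)) := by
  induction M with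
  | zero => simp [poch]
  | succ M ih =>
    have key : poch (x + y) (M + 1) =
        (∑ i ∈ range (M + 1), (M.choose i : ℂ) * (poch x (i + 1) * poch y (M - i))) +
        (∑ i ∈ range (M + 1), (M.choose i : ℂ) * (poch x i * poch y (M - i + 1))) := by
      rw [poch_succ, ih, Finset.sum_mul, ← Finset.sum_add_distrib]
      apply Finset.sum_congr rfl
      intro i hi
      rw [Finset.mem_range] at hi
      have hi' : i ≤ M := Nat.lt_succ_iff.mp hi
      have hsum : ((i : ℂ)) + ((M - i : ℕ) : ℂ) = (M : ℂ) := by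
        rw [← Nat.cast_add, Nat.add_sub_cancel' hi']
      rw [poch_succ, poch_succ]
      have hxy : x + y + (M : ℂ) = (x + i) + (y + ((M - i : ℕ) : ℂ)) := by
        rw [← hsum]; ring
      rw [hxy]
      ring
    have hg : ∑ i ∈ range (M + 1 + 1), (M.choose i : ℂ) * (poch x i * poch y (M + 1 - i))
        = ∑ i ∈ range (M + 1), (M.choose i : ℂ) * (poch x i * poch y (M - i + 1)) := by
      rw [Finset.sum_range_succ, Nat.choose_succ_self, Nat.cast_zero, zero_mul, add_zero]
      apply Finset.sum_congr rfl
      intro i hi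
      rw [Finset.mem_range] at hi
      have h1 : M + 1 - i = M - i + 1 := by omega
      rw [h1]
    have hg' : ∑ i ∈ range (M + 1 + 1), (M.choose i : ℂ) * (poch x i * poch y (M + 1 - i))
        = (∑ i ∈ range (M + 1), (M.choose (i + 1) : ℂ) * (poch x (i + 1) * poch y (M - i)))
          + poch y (M + 1) := by
      rw [Finset.sum_range_succ' (fun i => (M.choose i : ℂ) * (poch x i * poch y (M + 1 - i))) (M + 1)]
      congr 1
      · apply Finset.sum_congr rfl
        intro i hi
        rw [Finset.mem_range] at hi
        congr 3
        omega
      · simp [poch_zero]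
    have hS2 : (∑ i ∈ range (M + 1), (M.choose (i + 1) : ℂ) * (poch x (i + 1) * poch y (M - i)))
          + poch y (M + 1)
        = ∑ i ∈ range (M + 1), (M.choose i : ℂ) * (poch x i * poch y (M - i + 1)) :=
      hg'.symm.trans hg
    rw [key, Finset.sum_range_succ'
      (fun i => (((M + 1).choose i : ℂ)) * (poch x i * poch y (M + 1 - i))) (M + 1)]
    have hsplit : ∀ i ∈ range (M + 1),
        (((M + 1).choose (i + 1) : ℕ) : ℂ) * (poch x (i + 1) * poch y (M + 1 - (i + 1)))
        = (M.choose i : ℂ) * (poch x (i + 1) * poch y (M - i))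
          + (M.choose (i + 1) : ℂ) * (poch x (i + 1) * poch y (M - i)) := by
      intro i hi
      have h1 : M + 1 - (i + 1) = M - i := by omega
      rw [h1, Nat.choose_succ_succ, Nat.cast_add, add_mul]
    rw [Finset.sum_congr rfl hsplit, Finset.sum_add_distrib]
    have hf0 : (((M + 1).choose 0 : ℕ) : ℂ) * (poch x 0 * poch y (M + 1 - 0)) = poch y (M + 1) := by
      simp [poch_zero]
    rw [hf0, add_assoc, hS2]

lemma poch_one (a : ℂ) : poch a 1 = a := by simp [poch]

lemma poch_left (a : ℂ) (m : ℕ) : poch a (m + 1) = a * poch (a + 1) m := by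
  rw [Nat.add_comm, poch_add, poch_one, Nat.cast_one]

lemma chu : ∀ (M : ℕ) (B C : ℂ),
    ∑ m ∈ range (M + 1), (-1 : ℂ) ^ m * (M.choose m : ℂ) * poch B m * poch (C + m) (M - m)
      = poch (C - B) M := by
  intro M
  induction M with
  | zero => intro B C; simp [poch]
  | succ M ih =>
    intro B C
    have hS1a : ∑ m ∈ range (M + 1),
        (-1 : ℂ) ^ m * (M.choose m : ℂ) * poch B (m + 1) * poch (C + (↑(m + 1) : ℂ)) (M - m)
        = B * poch (C - B) M := by
      have hih := ih (B + 1) (C + 1)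
      have hCB : C + 1 - (B + 1) = C - B := by ring
      rw [hCB] at hih
      rw [← hih, Finset.mul_sum]
      apply Finset.sum_congr rfl
      intro m hm
      rw [poch_left]
      have harg : C + (↑(m + 1) : ℂ) = C + 1 + (m : ℂ) := by push_cast; ring
      rw [harg]
      ring
    have hgsucc : ∑ m ∈ range (M + 1 + 1),
        (-1 : ℂ) ^ m * (M.choose m : ℂ) * poch B m * poch (C + m) (M + 1 - m)
        = (∑ m ∈ range (M + 1), -((-1 : ℂ) ^ m * (M.choose (m + 1) : ℂ) * poch B (m + 1) *
            poch (C + (↑(m + 1) : ℂ)) (M - m))) + poch C (M + 1) := by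
      rw [Finset.sum_range_succ'
        (fun m => (-1 : ℂ) ^ m * (M.choose m : ℂ) * poch B m * poch (C + m) (M + 1 - m)) (M + 1)]
      congr 1
      · apply Finset.sum_congr rfl
        intro m hm
        rw [Finset.mem_range] at hm
        have h1 : M + 1 - (m + 1) = M - m := by omega
        rw [h1, pow_succ]
        ring
      · simp [poch_zero]
    have hgtop : ∑ m ∈ range (M + 1 + 1),
        (-1 : ℂ) ^ m * (M.choose m : ℂ) * poch B m * poch (C + m) (M + 1 - m)
        = (C + M) * poch (C - B) M := by
      rw [Finset.sum_range_succ, Nat.choose_succ_self, Nat.cast_zero]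
      rw [← ih B C, Finset.mul_sum]
      rw [show ((-1 : ℂ) ^ (M + 1) * 0 * poch B (M + 1) * poch (C + ↑(M + 1)) (M + 1 - (M + 1))) = 0
        from by ring, add_zero]
      apply Finset.sum_congr rfl
      intro m hm
      rw [Finset.mem_range] at hm
      have hm' : m ≤ M := Nat.lt_succ_iff.mp hm
      have h1 : M + 1 - m = (M - m) + 1 := by omega
      rw [h1, poch_succ]
      have h2 : C + (m : ℂ) + ((M - m : ℕ) : ℂ) = C + (M : ℂ) := by
        rw [add_assoc, ← Nat.cast_add, Nat.add_sub_cancel' hm']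
      rw [h2]
      ring
    -- now assemble
    rw [Finset.sum_range_succ'
      (fun m => (-1 : ℂ) ^ m * ((M + 1).choose m : ℂ) * poch B m * poch (C + m) (M + 1 - m)) (M + 1)]
    have hsplit : ∀ m ∈ range (M + 1),
        (-1 : ℂ) ^ (m + 1) * ((M + 1).choose (m + 1) : ℂ) * poch B (m + 1) *
          poch (C + (↑(m + 1) : ℂ)) (M + 1 - (m + 1))
        = -((-1 : ℂ) ^ m * (M.choose m : ℂ) * poch B (m + 1) *
              poch (C + (↑(m + 1) : ℂ)) (M - m))
          + -((-1 : ℂ) ^ m * (M.choose (m + 1) : ℂ) * poch B (m + 1) *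
              poch (C + (↑(m + 1) : ℂ)) (M - m)) := by
      intro m hm
      rw [Finset.mem_range] at hm
      have h1 : M + 1 - (m + 1) = M - m := by omega
      rw [h1, Nat.choose_succ_succ, Nat.cast_add, pow_succ]
      ring
    rw [Finset.sum_congr rfl hsplit, Finset.sum_add_distrib]
    have hF0 : (-1 : ℂ) ^ 0 * (((M + 1).choose 0 : ℕ) : ℂ) * poch B 0 *
        poch (C + ((0 : ℕ) : ℂ)) (M + 1 - 0) = poch C (M + 1) := by
      simp [poch_zero]
    rw [hF0, add_assoc, ← hgsucc, hgtop]
    have hneg : ∑ m ∈ range (M + 1),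
        -((-1 : ℂ) ^ m * (M.choose m : ℂ) * poch B (m + 1) *
            poch (C + (↑(m + 1) : ℂ)) (M - m))
        = -(B * poch (C - B) M) := by
      rw [← hS1a]
      rw [Finset.sum_neg_distrib]
    rw [hneg, poch_succ]
    ring

open Polynomial in
lemma binom_id (n j : ℕ) :
    ∑ k ∈ range (n + 1), (if k ≤ j then
        (-1 : ℂ) ^ k * (n.choose k : ℂ) * 4 ^ k * ((2 * (n - k)).choose (j - k) : ℂ) else 0)
      = (-1 : ℂ) ^ j * ((2 * n).choose j : ℂ) := by
  have hpoly : ((X : ℂ[X]) + C (-1)) ^ (2 * n)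
      = ∑ k ∈ range (n + 1), C ((-4 : ℂ) ^ k * (n.choose k : ℂ)) *
          ((X + 1) ^ (2 * (n - k)) * X ^ k) := by
    have h1 : ((X : ℂ[X]) + C (-1)) ^ (2 * n)
        = ((C (-4 : ℂ) * X) + (X + 1) ^ 2) ^ n := by
      rw [pow_mul]
      congr 1
      simp only [map_neg, map_one, map_ofNat]
      ring
    rw [h1, add_pow]
    apply Finset.sum_congr rfl
    intro k hk
    rw [Finset.mem_range, Nat.lt_succ_iff] at hk
    rw [mul_pow, ← pow_mul, ← C_pow]
    have h2 : 2 * (n - k) = (n - k) * 2 := by ring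
    rw [h2]
    rw [← Polynomial.C_eq_natCast (n.choose k)]
    rw [C_mul]
    ring
  have hco := congrArg (fun p => Polynomial.coeff p j) hpoly
  simp only [Polynomial.finset_sum_coeff, Polynomial.coeff_C_mul,
    Polynomial.coeff_X_add_C_pow, Polynomial.coeff_mul_X_pow',
    Polynomial.coeff_one_add_X_pow, add_comm] at hco
  -- hco : (-1)^(2n-j) * C(2n,j) = ∑ k, (-4)^k * C(n,k) * (if k ≤ j then C(2(n-k),j-k) else 0)
  have hL : ((-1 : ℂ)) ^ (2 * n - j) * ((2 * n).choose j : ℂ)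
      = (-1 : ℂ) ^ j * ((2 * n).choose j : ℂ) := by
    rcases le_or_gt j (2 * n) with h | h
    · have hpar : (-1 : ℂ) ^ (2 * n - j) * (-1) ^ j = 1 := by
        rw [← pow_add]
        have : 2 * n - j + j = 2 * n := by omega
        rw [this, pow_mul]
        norm_num
      have hj : ((-1 : ℂ)) ^ j * (-1 : ℂ) ^ j = 1 := by
        rw [← pow_add, ← two_mul, pow_mul]; norm_num
      have hx : ((-1 : ℂ)) ^ j ≠ 0 := pow_ne_zero _ (by norm_num)
      have h2 : ((-1 : ℂ)) ^ (2 * n - j) = (-1 : ℂ) ^ j :=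
        mul_right_cancel₀ hx (hpar.trans hj.symm)
      rw [h2]
    · rw [Nat.choose_eq_zero_of_lt h]
      simp
  rw [← hL]
  rw [hco]
  apply Finset.sum_congr rfl
  intro k hk
  split_ifs with h
  · rw [neg_pow 4 k]  -- hope: (-4)^k = (-1)^k * 4^k
    ring
  · simp

lemma dup (a : ℂ) (k : ℕ) : poch a k * poch (a + 1 / 2) k * 4 ^ k = poch (2 * a) (2 * k) := by
  induction k with
  | zero => simp [poch]
  | succ k ih =>
    have h2 : 2 * (k + 1) = (2 * k + 1) + 1 := by ring
    rw [h2]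
    simp only [poch_succ]
    rw [← ih]
    push_cast
    ring

lemma poch_neg (n : ℕ) : ∀ k : ℕ, k ≤ n →
    poch (-(n : ℂ)) k = (-1) ^ k * (k.factorial : ℂ) * (n.choose k : ℂ) := by
  intro k
  induction k with
  | zero => intro _; simp [poch]
  | succ k ih =>
    intro hk
    have hk' : k ≤ n := by omega
    rw [poch_succ, ih hk']
    have h := Nat.choose_succ_right_eq n k
    have hc := congrArg (Nat.cast : ℕ → ℂ) h
    push_cast [Nat.cast_sub hk'] at hc
    have hfac : (((k + 1).factorial : ℕ) : ℂ) = ((k : ℂ) + 1) * (k.factorial : ℂ) := by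
      rw [Nat.factorial_succ]; push_cast; ring
    rw [hfac, pow_succ]
    linear_combination ((-1 : ℂ) ^ k * (k.factorial : ℂ)) * hc

lemma sum_ite_shift (N k : ℕ) (hk : k ≤ N) (f : ℕ → ℂ) :
    ∑ j ∈ range (N + 1), (if k ≤ j then f j else 0) = ∑ m ∈ range (N + 1 - k), f (k + m) := by
  rw [Finset.range_eq_Ico, ← Finset.sum_Ico_consecutive _ (Nat.zero_le k) (by omega : k ≤ N + 1)]
  have h1 : ∑ j ∈ Finset.Ico 0 k, (if k ≤ j then f j else 0) = 0 := by
    apply Finset.sum_eq_zero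
    intro j hj
    rw [Finset.mem_Ico] at hj
    rw [if_neg (by omega)]
  have h2 : ∑ j ∈ Finset.Ico k (N + 1), (if k ≤ j then f j else 0)
      = ∑ j ∈ Finset.Ico k (N + 1), f j := by
    apply Finset.sum_congr rfl
    intro j hj
    rw [Finset.mem_Ico] at hj
    rw [if_pos hj.1]
  rw [h1, h2, zero_add, Finset.sum_Ico_eq_sum_range, Finset.range_eq_Ico]

lemma sum_range_shrink (A B : ℕ) (h : A ≤ B) (f : ℕ → ℂ) (hf : ∀ i, A ≤ i → f i = 0) :
    ∑ i ∈ range B, f i = ∑ i ∈ range A, f i := by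
  symm
  apply Finset.sum_subset (Finset.range_subset_range.2 h)
  intro x _ hnx
  rw [Finset.mem_range, not_lt] at hnx
  exact hf x hnx

lemma U_eq_T (n : ℕ) (b c : ℂ) :
    ∑ k ∈ range (n + 1), (-1 : ℂ) ^ k * (n.choose k : ℂ) * 4 ^ k * poch b k * poch c k *
        poch (b + c + 2 * (k : ℂ)) (2 * (n - k))
      = ∑ j ∈ range (2 * n + 1), (-1 : ℂ) ^ j * ((2 * n).choose j : ℂ) * poch b j *
          poch c (2 * n - j) := by
  have step1 : ∀ k ∈ range (n + 1),
      (-1 : ℂ) ^ k * (n.choose k : ℂ) * 4 ^ k * poch b k * poch c k *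
        poch (b + c + 2 * (k : ℂ)) (2 * (n - k))
      = ∑ j ∈ range (2 * n + 1), (if k ≤ j then
          (-1 : ℂ) ^ k * (n.choose k : ℂ) * 4 ^ k * ((2 * (n - k)).choose (j - k) : ℂ)
          else 0) * (poch b j * poch c (2 * n - j)) := by
    intro k hk
    rw [Finset.mem_range, Nat.lt_succ_iff] at hk
    have hmove : ∀ j, (if k ≤ j then
          (-1 : ℂ) ^ k * (n.choose k : ℂ) * 4 ^ k * ((2 * (n - k)).choose (j - k) : ℂ)
          else 0) * (poch b j * poch c (2 * n - j))
        = (if k ≤ j then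
          (-1 : ℂ) ^ k * (n.choose k : ℂ) * 4 ^ k * ((2 * (n - k)).choose (j - k) : ℂ) *
            (poch b j * poch c (2 * n - j)) else 0) := by
      intro j
      split_ifs <;> simp
    rw [Finset.sum_congr rfl (fun j _ => hmove j)]
    rw [sum_ite_shift (2 * n) k (by omega)]
    have hshrink : ∑ m ∈ range (2 * n + 1 - k),
        ((-1 : ℂ) ^ k * (n.choose k : ℂ) * 4 ^ k * ((2 * (n - k)).choose (k + m - k) : ℂ) *
          (poch b (k + m) * poch c (2 * n - (k + m))))
        = ∑ m ∈ range (2 * (n - k) + 1),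
        ((-1 : ℂ) ^ k * (n.choose k : ℂ) * 4 ^ k * ((2 * (n - k)).choose (k + m - k) : ℂ) *
          (poch b (k + m) * poch c (2 * n - (k + m)))) := by
      apply sum_range_shrink (2 * (n - k) + 1) (2 * n + 1 - k) (by omega)
      intro i hi
      have hlt : 2 * (n - k) < i := by omega
      rw [Nat.add_sub_cancel_left, Nat.choose_eq_zero_of_lt hlt]
      simp
    rw [hshrink]
    have hx : b + c + 2 * (k : ℂ) = (b + (k : ℂ)) + (c + (k : ℂ)) := by ring
    rw [hx, vander, Finset.mul_sum]
    apply Finset.sum_congr rfl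
    intro i hi
    rw [Finset.mem_range, Nat.lt_succ_iff] at hi
    rw [Nat.add_sub_cancel_left]
    have hb : poch b (k + i) = poch b k * poch (b + (k : ℂ)) i := poch_add b k i
    have h2n : 2 * n - (k + i) = k + (2 * (n - k) - i) := by omega
    have hc2 : poch c (2 * n - (k + i)) = poch c k * poch (c + (k : ℂ)) (2 * (n - k) - i) := by
      rw [h2n, poch_add]
    rw [hb, hc2]
    ring
  rw [Finset.sum_congr rfl step1, Finset.sum_comm]
  apply Finset.sum_congr rfl
  intro j hj
  rw [← Finset.sum_mul, binom_id]
  ring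

lemma R_eq_T (n : ℕ) (b s : ℂ) :
    ∑ j ∈ range (2 * n + 1), (-1 : ℂ) ^ j * ((2 * n).choose j : ℂ) * 2 ^ j * poch b j *
        poch (s + (j : ℂ)) (2 * n - j)
      = ∑ k ∈ range (2 * n + 1), (-1 : ℂ) ^ k * ((2 * n).choose k : ℂ) * poch b k *
          poch (s - b) (2 * n - k) := by
  have h2j : ∀ j ∈ range (2 * n + 1),
      (-1 : ℂ) ^ j * ((2 * n).choose j : ℂ) * 2 ^ j * poch b j * poch (s + (j : ℂ)) (2 * n - j)
      = ∑ k ∈ range (2 * n + 1), (if k ≤ j then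
          (-1 : ℂ) ^ j * ((2 * n).choose j : ℂ) * (j.choose k : ℂ) * poch b j *
            poch (s + (j : ℂ)) (2 * n - j) else 0) := by
    intro j hj
    rw [Finset.mem_range, Nat.lt_succ_iff] at hj
    have hpow : (2 : ℂ) ^ j = ∑ k ∈ range (2 * n + 1), (if k ≤ j then (j.choose k : ℂ) else 0) := by
      have h1 : ∑ k ∈ range (j + 1), (if k ≤ j then (j.choose k : ℂ) else 0)
          = ∑ k ∈ range (2 * n + 1), (if k ≤ j then (j.choose k : ℂ) else 0) := by
        apply Finset.sum_subset (Finset.range_subset_range.2 (by omega))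
        intro x _ hnx
        rw [Finset.mem_range, not_lt] at hnx
        rw [if_neg (by omega)]
      rw [← h1]
      have h2 : ∑ k ∈ range (j + 1), (if k ≤ j then (j.choose k : ℂ) else 0)
          = ∑ k ∈ range (j + 1), (j.choose k : ℂ) := by
        apply Finset.sum_congr rfl
        intro k hk
        rw [Finset.mem_range, Nat.lt_succ_iff] at hk
        rw [if_pos hk]
      rw [h2, ← Nat.cast_sum, Nat.sum_range_choose]
      push_cast
      ring
    calc (-1 : ℂ) ^ j * ((2 * n).choose j : ℂ) * 2 ^ j * poch b j * poch (s + (j : ℂ)) (2 * n - j)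
        = (2 : ℂ) ^ j * ((-1 : ℂ) ^ j * ((2 * n).choose j : ℂ) * poch b j *
            poch (s + (j : ℂ)) (2 * n - j)) := by ring
      _ = _ := by
          rw [hpow, Finset.sum_mul]
          apply Finset.sum_congr rfl
          intro k _
          split_ifs <;> ring
  rw [Finset.sum_congr rfl h2j, Finset.sum_comm]
  apply Finset.sum_congr rfl
  intro k hk
  rw [Finset.mem_range, Nat.lt_succ_iff] at hk
  rw [sum_ite_shift (2 * n) k hk]
  have hterm : ∀ m ∈ range (2 * n + 1 - k),
      (-1 : ℂ) ^ (k + m) * ((2 * n).choose (k + m) : ℂ) * ((k + m).choose k : ℂ) *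
        poch b (k + m) * poch (s + ((k + m : ℕ) : ℂ)) (2 * n - (k + m))
      = ((-1 : ℂ) ^ k * ((2 * n).choose k : ℂ) * poch b k) *
        ((-1 : ℂ) ^ m * ((2 * n - k).choose m : ℂ) * poch (b + (k : ℂ)) m *
          poch ((s + (k : ℂ)) + (m : ℂ)) ((2 * n - k) - m)) := by
    intro m hm
    rw [Finset.mem_range] at hm
    have hkm : k + m ≤ 2 * n := by omega
    have hcm := Nat.choose_mul (n := 2 * n) (Nat.le_add_right k m)
    have hcm' : (((2 * n).choose (k + m) : ℕ) : ℂ) * (((k + m).choose k : ℕ) : ℂ)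
        = (((2 * n).choose k : ℕ) : ℂ) * (((2 * n - k).choose m : ℕ) : ℂ) := by
      rw [← Nat.cast_mul, ← Nat.cast_mul, hcm, Nat.add_sub_cancel_left]
    have hpb : poch b (k + m) = poch b k * poch (b + (k : ℂ)) m := poch_add b k m
    have hsub : 2 * n - (k + m) = (2 * n - k) - m := by omega
    have hcast : s + ((k + m : ℕ) : ℂ) = (s + (k : ℂ)) + (m : ℂ) := by push_cast; ring
    rw [hpb, hsub, hcast, pow_add]
    linear_combination ((-1 : ℂ) ^ (k + m) * poch b k * poch (b + (k : ℂ)) m *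
      poch ((s + (k : ℂ)) + (m : ℂ)) ((2 * n - k) - m)) * hcm'
  rw [Finset.sum_congr rfl hterm, ← Finset.mul_sum]
  have hrange : 2 * n + 1 - k = (2 * n - k) + 1 := by omega
  rw [hrange, chu (2 * n - k) (b + (k : ℂ)) (s + (k : ℂ))]
  have hsb : s + (k : ℂ) - (b + (k : ℂ)) = s - b := by ring
  rw [hsb]

/-- Terminating hypergeometric series `₃F₂(-n, A, B; C, D; z)`. -/
noncomputable def F32 (n : ℕ) (A B C D z : ℂ) : ℂ :=
  ∑ k ∈ Finset.range (n + 1),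
    poch (-(n : ℂ)) k * poch A k * poch B k / (poch C k * poch D k * (k.factorial : ℂ)) * z ^ k

/-- Terminating hypergeometric series `₂F₁(-m, A; C; z)`. -/
noncomputable def F21 (m : ℕ) (A C z : ℂ) : ℂ :=
  ∑ k ∈ Finset.range (m + 1),
    poch (-(m : ℂ)) k * poch A k / (poch C k * (k.factorial : ℂ)) * z ^ k

/-- Quadratic transformation
`₃F₂(-n, a+ix, a-ix; a, a+1/2; 1) = ₂F₁(-2n, a+ix; 2a; 2)` for complex `a`, `x`,
where `a` is not a nonpositive integer or nonpositive half-integer. -/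
theorem F32_eq_F21_even (n : ℕ) (a x : ℂ) (ha : ∀ m : ℕ, 2 * a ≠ -(m : ℂ)) :
    F32 n (a + Complex.I * x) (a - Complex.I * x) a (a + 1 / 2) 1 =
      F21 (2 * n) (a + Complex.I * x) (2 * a) 2 := by
  set b := a + Complex.I * x with hb
  set c := a - Complex.I * x with hc
  have hz : ∀ j : ℕ, 2 * a + (j : ℂ) ≠ 0 := by
    intro j h
    exact ha j (by linear_combination h)
  have hP : poch (2 * a) (2 * n) ≠ 0 := poch_ne_zero hz _
  have hA : ∀ k : ℕ, poch a k ≠ 0 := by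
    refine fun k => poch_ne_zero (fun j h => ?_) k
    exact hz (2 * j) (by push_cast; linear_combination 2 * h)
  have hH : ∀ k : ℕ, poch (a + 1 / 2) k ≠ 0 := by
    refine fun k => poch_ne_zero (fun j h => ?_) k
    exact hz (2 * j + 1) (by push_cast; linear_combination 2 * h)
  have hD : ∀ k : ℕ, poch (2 * a) k ≠ 0 := fun k => poch_ne_zero hz k
  refine mul_right_cancel₀ hP ?_
  rw [F32, F21, Finset.sum_mul, Finset.sum_mul]
  have hLHS : ∀ k ∈ range (n + 1),
      poch (-(n : ℂ)) k * poch b k * poch c k /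
          (poch a k * poch (a + 1 / 2) k * (k.factorial : ℂ)) * 1 ^ k * poch (2 * a) (2 * n)
      = (-1 : ℂ) ^ k * (n.choose k : ℂ) * 4 ^ k * poch b k * poch c k *
          poch (b + c + 2 * (k : ℂ)) (2 * (n - k)) := by
    intro k hk
    rw [Finset.mem_range, Nat.lt_succ_iff] at hk
    have hsplit : poch (2 * a) (2 * n)
        = poch (2 * a) (2 * k) * poch (2 * a + ((2 * k : ℕ) : ℂ)) (2 * (n - k)) := by
      rw [← poch_add]
      congr 1
      omega
    have harg : b + c + 2 * (k : ℂ) = 2 * a + ((2 * k : ℕ) : ℂ) := by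
      rw [hb, hc]; push_cast; ring
    rw [hsplit, harg, poch_neg n k hk, ← dup a k, one_pow]
    have hf : (k.factorial : ℂ) ≠ 0 := Nat.cast_ne_zero.2 (Nat.factorial_ne_zero k)
    have h1 := hA k
    have h2 := hH k
    have hDne : poch a k * poch (a + 1 / 2) k * (k.factorial : ℂ) ≠ 0 :=
      mul_ne_zero (mul_ne_zero h1 h2) hf
    rw [div_mul_eq_mul_div, div_mul_eq_mul_div, div_eq_iff hDne]
    ring
  rw [Finset.sum_congr rfl hLHS, U_eq_T]
  have hRHS : ∀ j ∈ range (2 * n + 1),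
      poch (-((2 * n : ℕ) : ℂ)) j * poch b j / (poch (2 * a) j * (j.factorial : ℂ)) * 2 ^ j *
        poch (2 * a) (2 * n)
      = (-1 : ℂ) ^ j * ((2 * n).choose j : ℂ) * 2 ^ j * poch b j *
          poch (2 * a + (j : ℂ)) (2 * n - j) := by
    intro j hj
    rw [Finset.mem_range, Nat.lt_succ_iff] at hj
    have hsplit : poch (2 * a) (2 * n)
        = poch (2 * a) j * poch (2 * a + (j : ℂ)) (2 * n - j) := by
      rw [← poch_add]
      congr 1
      omega
    rw [hsplit, poch_neg (2 * n) j hj]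
    have hf : (j.factorial : ℂ) ≠ 0 := Nat.cast_ne_zero.2 (Nat.factorial_ne_zero j)
    have h1 := hD j
    have hDne : poch (2 * a) j * (j.factorial : ℂ) ≠ 0 := mul_ne_zero h1 hf
    rw [div_mul_eq_mul_div, div_mul_eq_mul_div, div_eq_iff hDne]
    ring
  rw [Finset.sum_congr rfl hRHS, R_eq_T n b (2 * a)]
  have h2ab : 2 * a - b = c := by rw [hb, hc]; ring
  rw [h2ab]
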